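/- Let n ≥ 3, m ≥ 1, M = circ(−2,1,0,…,0,1). Suppose X(t) = g(t)X^0 is a solution of dX/dt = (−1)^{m+1}M^m X with X^0 ∈ ℂ^n nonzero, g : ℝ → ℝ differentiable, g(0)=1, and g(t) ≠ 0 for all t. Then there exists k ∈ {0,1,…,n−1} such that g(t) = e^{λ_{m,k} t} and X^0 lies in the eigenspace of (−1)^{m+1}M^m for λ_{m,k}; for 1 ≤ k ≤ n−1 with k ≠ n−k this eigenspace is the span of P_k and P_{n−k}. -/

import Mathlib

open Complex Real

/-- The n×n circulant matrix circ(−2,1,0,…,0,1) over ℂ. -/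
def cycMC (n : ℕ) [NeZero n] : Matrix (Fin n) (Fin n) ℂ :=
  Matrix.of fun i j =>
    (if i = j then (-2 : ℂ) else 0) + (if i = j + 1 then 1 else 0) + (if j = i + 1 then 1 else 0)

/-- The discrete Fourier vector P_k. -/
noncomputable def fourierP (n : ℕ) (k : Fin n) : Fin n → ℂ :=
  fun j => Complex.exp (2 * Real.pi * Complex.I / n) ^ ((j : ℕ) * (k : ℕ))

/-- The eigenvalue λ_{m,k} = −4^m sin^{2m}(πk/n). -/
noncomputable def lam (n m k : ℕ) : ℝ := -(4 : ℝ) ^ m * Real.sin (Real.pi * k / n) ^ (2 * m)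

noncomputable def ww (n : ℕ) : ℂ := Complex.exp (2 * Real.pi * Complex.I / n)

lemma fourierP_apply (n : ℕ) (k j : Fin n) : fourierP n k j = ww n ^ ((j : ℕ) * (k : ℕ)) := rfl

lemma ww_prim (n : ℕ) [NeZero n] : IsPrimitiveRoot (ww n) n :=
  Complex.isPrimitiveRoot_exp n (NeZero.ne n)

lemma ww_pow_n (n : ℕ) [NeZero n] : ww n ^ n = 1 := (ww_prim n).pow_eq_one

lemma ww_ne_zero (n : ℕ) : ww n ≠ 0 := Complex.exp_ne_zero _

lemma ww_pow_mod (n : ℕ) [NeZero n] (a : ℕ) : ww n ^ a = ww n ^ (a % n) := by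
  conv_lhs => rw [← Nat.div_add_mod a n]
  rw [pow_add, pow_mul, ww_pow_n, one_pow, one_mul]

lemma ww_pow_congr (n : ℕ) [NeZero n] {a b : ℕ} (h : a % n = b % n) :
    ww n ^ a = ww n ^ b := by rw [ww_pow_mod n a, ww_pow_mod n b, h]

lemma orth (n : ℕ) [NeZero n] (a b : Fin n) :
    ∑ i : Fin n, ww n ^ ((a : ℕ) * (i : ℕ)) * (ww n ^ ((b : ℕ) * (i : ℕ)))⁻¹
      = if a = b then (n : ℂ) else 0 := by
  have key : ∀ i : Fin n,
      ww n ^ ((a : ℕ) * (i : ℕ)) * (ww n ^ ((b : ℕ) * (i : ℕ)))⁻¹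
        = (ww n ^ (a : ℕ) * (ww n ^ (b : ℕ))⁻¹) ^ (i : ℕ) := by
    intro i; rw [mul_pow, inv_pow, ← pow_mul, ← pow_mul]
  simp_rw [key]
  rw [Fin.sum_univ_eq_sum_range (fun i => (ww n ^ (a : ℕ) * (ww n ^ (b : ℕ))⁻¹) ^ i) n]
  by_cases h : a = b
  · subst h
    simp [mul_inv_cancel₀ (pow_ne_zero (a : ℕ) (ww_ne_zero n))]
  · have hζn : (ww n ^ (a : ℕ) * (ww n ^ (b : ℕ))⁻¹) ^ n = 1 := by
      rw [mul_pow, inv_pow, ← pow_mul, ← pow_mul, Nat.mul_comm (a : ℕ) n,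
        Nat.mul_comm (b : ℕ) n, pow_mul, pow_mul, ww_pow_n, one_pow, one_pow, inv_one, mul_one]
    have hζ1 : ww n ^ (a : ℕ) * (ww n ^ (b : ℕ))⁻¹ ≠ 1 := by
      rw [← div_eq_mul_inv]
      intro hc
      rw [div_eq_one_iff_eq (pow_ne_zero _ (ww_ne_zero n))] at hc
      exact h (Fin.val_inj.mp ((ww_prim n).pow_inj a.isLt b.isLt hc))
    rw [geom_sum_eq hζ1, hζn, sub_self, zero_div]
    simp [h]

noncomputable def coef (n : ℕ) (v : Fin n → ℂ) (k : Fin n) : ℂ :=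
  (n : ℂ)⁻¹ * ∑ j : Fin n, v j * (ww n ^ ((j : ℕ) * (k : ℕ)))⁻¹

lemma expand (n : ℕ) [NeZero n] (v : Fin n → ℂ) :
    v = ∑ k : Fin n, coef n v k • fourierP n k := by
  have hn0 : (n : ℂ) ≠ 0 := Nat.cast_ne_zero.mpr (NeZero.ne n)
  funext i
  rw [Finset.sum_apply]
  simp only [Pi.smul_apply, smul_eq_mul, coef, fourierP_apply]
  have step : ∀ k : Fin n,
      ((n : ℂ)⁻¹ * ∑ j : Fin n, v j * (ww n ^ ((j : ℕ) * (k : ℕ)))⁻¹) * ww n ^ ((i : ℕ) * (k : ℕ))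
        = (n : ℂ)⁻¹ * ∑ j : Fin n, v j * (ww n ^ ((i : ℕ) * (k : ℕ)) * (ww n ^ ((j : ℕ) * (k : ℕ)))⁻¹) := by
    intro k
    rw [mul_assoc, Finset.sum_mul]
    congr 1
    apply Finset.sum_congr rfl
    intro j _
    ring
  simp_rw [step, ← Finset.mul_sum]
  rw [Finset.sum_comm]
  have inner : ∀ j : Fin n,
      ∑ k : Fin n, v j * (ww n ^ ((i : ℕ) * (k : ℕ)) * (ww n ^ ((j : ℕ) * (k : ℕ)))⁻¹)
        = v j * (if i = j then (n : ℂ) else 0) := by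
    intro j
    rw [← Finset.mul_sum, orth n i j]
  simp_rw [inner]
  simp_rw [mul_ite, mul_zero]
  rw [Finset.sum_ite_eq Finset.univ i (fun j => v j * (n:ℂ))]
  simp only [Finset.mem_univ, if_true]
  field_simp

lemma coef_unique (n : ℕ) [NeZero n] (e : Fin n → ℂ)
    (h : ∑ k : Fin n, e k • fourierP n k = 0) : e = 0 := by
  have hn0 : (n : ℂ) ≠ 0 := Nat.cast_ne_zero.mpr (NeZero.ne n)
  funext b
  have hpair := congrArg (fun w : Fin n → ℂ =>
    ∑ i : Fin n, w i * (ww n ^ ((b : ℕ) * (i : ℕ)))⁻¹) h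
  simp only [Pi.zero_apply, zero_mul, Finset.sum_const_zero] at hpair
  have key : ∑ i : Fin n, (∑ k : Fin n, e k • fourierP n k) i * (ww n ^ ((b : ℕ) * (i : ℕ)))⁻¹
      = (n : ℂ) * e b := by
    simp only [Finset.sum_apply, Pi.smul_apply, smul_eq_mul, fourierP_apply, Finset.sum_mul]
    rw [Finset.sum_comm]
    have inner : ∀ k : Fin n,
        ∑ i : Fin n, e k * ww n ^ ((i : ℕ) * (k : ℕ)) * (ww n ^ ((b : ℕ) * (i : ℕ)))⁻¹
          = e k * (if k = b then (n : ℂ) else 0) := by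
      intro k
      rw [← orth n k b, Finset.mul_sum]
      apply Finset.sum_congr rfl
      intro i _
      rw [mul_assoc, Nat.mul_comm (i : ℕ) (k : ℕ)]
    simp_rw [inner, mul_ite, mul_zero]
    rw [Finset.sum_ite_eq' Finset.univ b (fun k => e k * (n : ℂ))]
    simp only [Finset.mem_univ, if_true]
    ring
  rw [key] at hpair
  simpa [hn0] using hpair

noncomputable def mu (n : ℕ) (k : Fin n) : ℂ :=
  ww n ^ (k : ℕ) + ww n ^ ((n - 1) * (k : ℕ)) - 2

lemma cyc_mulVec (n : ℕ) [NeZero n] (hn3 : 3 ≤ n) (k : Fin n) :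
    (cycMC n).mulVec (fourierP n k) = mu n k • fourierP n k := by
  have h1n : (1 : Fin n).val = 1 := by
    rw [Fin.val_one']; exact Nat.mod_eq_of_lt (by omega)
  funext i
  have hcond : ∀ j : Fin n, (i = j + 1) ↔ (j = i - 1) := by
    intro j
    rw [eq_sub_iff_add_eq, eq_comm]
  simp only [Matrix.mulVec, dotProduct, cycMC, Matrix.of_apply, add_mul, ite_mul,
    one_mul, zero_mul, Finset.sum_add_distrib]
  simp_rw [hcond]
  rw [Finset.sum_ite_eq Finset.univ i (fun j => (-2 : ℂ) * fourierP n k j),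
    Finset.sum_ite_eq' Finset.univ (i - 1) (fun j => fourierP n k j),
    Finset.sum_ite_eq' Finset.univ (i + 1) (fun j => fourierP n k j)]
  simp only [Finset.mem_univ, if_true, Pi.smul_apply, smul_eq_mul]
  have e1 : fourierP n k (i + 1) = fourierP n k i * ww n ^ (k : ℕ) := by
    simp only [fourierP_apply]
    rw [← pow_add]
    apply ww_pow_congr
    have hv : ((i + 1 : Fin n) : ℕ) = ((i : ℕ) + 1) % n := by
      rw [Fin.val_add, h1n]
    rw [hv, show (i : ℕ) * (k : ℕ) + (k : ℕ) = ((i : ℕ) + 1) * (k : ℕ) by ring]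
    exact Nat.ModEq.mul_right (k : ℕ) (Nat.mod_modEq _ n)
  have e2 : fourierP n k (i - 1) = fourierP n k i * ww n ^ ((n - 1) * (k : ℕ)) := by
    simp only [fourierP_apply]
    rw [← pow_add]
    apply ww_pow_congr
    have hv : ((i - 1 : Fin n) : ℕ) = (n - 1 + (i : ℕ)) % n := by
      rw [Fin.sub_def, h1n]
    rw [hv, show (i : ℕ) * (k : ℕ) + (n - 1) * (k : ℕ) = (n - 1 + (i : ℕ)) * (k : ℕ) by ring]
    exact Nat.ModEq.mul_right (k : ℕ) (Nat.mod_modEq _ n)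
  rw [e1, e2, mu]
  ring

lemma cyc_pow_mulVec (n : ℕ) [NeZero n] (hn3 : 3 ≤ n) (m : ℕ) (k : Fin n) :
    (cycMC n ^ m).mulVec (fourierP n k) = (mu n k) ^ m • fourierP n k := by
  induction m with
  | zero => simp [Matrix.one_mulVec]
  | succ m ih =>
      rw [pow_succ, ← Matrix.mulVec_mulVec, cyc_mulVec n hn3 k, Matrix.mulVec_smul, ih,
        smul_smul, pow_succ]
      ring_nf

lemma mu_eq (n : ℕ) [NeZero n] (hn3 : 3 ≤ n) (k : Fin n) :
    mu n k = ((-4 * Real.sin (Real.pi * k / n) ^ 2 : ℝ) : ℂ) := by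
  have hn0 : (n : ℂ) ≠ 0 := Nat.cast_ne_zero.mpr (NeZero.ne n)
  set θ : ℝ := 2 * Real.pi * (k : ℕ) / n with hθdef
  have h1 : ww n ^ (k : ℕ) = Complex.exp (θ * Complex.I) := by
    rw [ww, ← Complex.exp_nat_mul]
    congr 1
    have hne : (n : ℂ) ≠ 0 := hn0
    rw [hθdef]
    push_cast
    field_simp
  have h2 : ww n ^ ((n - 1) * (k : ℕ)) = Complex.exp (-(θ * Complex.I)) := by
    have hmul : ww n ^ ((n - 1) * (k : ℕ)) * ww n ^ (k : ℕ) = 1 := by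
      rw [← pow_add, show (n - 1) * (k : ℕ) + (k : ℕ) = n * (k : ℕ) by
        have h1n : 1 ≤ n := by omega
        calc (n - 1) * (k : ℕ) + (k : ℕ) = ((n - 1) + 1) * (k : ℕ) := by ring
          _ = n * (k : ℕ) := by rw [Nat.sub_add_cancel h1n]]
      rw [pow_mul, ww_pow_n, one_pow]
    rw [Complex.exp_neg, ← h1]
    field_simp [pow_ne_zero _ (ww_ne_zero n)] at hmul ⊢
    linear_combination hmul
  rw [mu, h1, h2]
  have h3 : Complex.exp (↑θ * Complex.I) + Complex.exp (-(↑θ * Complex.I)) - 2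
      = 2 * Complex.cos θ - 2 := by
    rw [Complex.exp_mul_I, ← neg_mul, Complex.exp_mul_I, Complex.cos_neg, Complex.sin_neg]
    ring
  rw [h3, ← Complex.ofReal_cos]
  have hr : 2 * Real.cos θ - 2 = -4 * Real.sin (Real.pi * (k : ℕ) / n) ^ 2 := by
    have hθ : θ = 2 * (Real.pi * (k : ℕ) / n) := by rw [hθdef]; ring
    rw [hθ, Real.cos_two_mul]
    nlinarith [Real.sin_sq_add_cos_sq (Real.pi * (k : ℕ) / n)]
  rw [← hr]
  push_cast
  ring

lemma lam_eigen (n : ℕ) [NeZero n] (hn3 : 3 ≤ n) (m : ℕ) (k : Fin n) :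
    (((-1 : ℂ) ^ (m + 1)) • (cycMC n ^ m)).mulVec (fourierP n k)
      = ((lam n m (k : ℕ) : ℝ) : ℂ) • fourierP n k := by
  rw [Matrix.smul_mulVec, cyc_pow_mulVec n hn3 m k, smul_smul]
  congr 1
  rw [mu_eq n hn3 k, lam]
  set s : ℝ := Real.sin (Real.pi * (k : ℕ) / n)
  push_cast
  have h4 : ((-4 * (s : ℂ) ^ 2)) ^ m = (-1 : ℂ) ^ m * 4 ^ m * (s : ℂ) ^ (2 * m) := by
    rw [show (-4 * (s : ℂ) ^ 2) = (-1) * (4 * (s : ℂ) ^ 2) by ring, mul_pow, mul_pow, ← pow_mul]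
    ring
  rw [h4]
  have h5 : (-1 : ℂ) ^ (m + 1) * (-1 : ℂ) ^ m = -1 := by
    rw [← pow_add, show m + 1 + m = 2 * m + 1 by ring]
    exact Odd.neg_one_pow ⟨m, by ring⟩
  calc (-1 : ℂ) ^ (m + 1) * ((-1 : ℂ) ^ m * 4 ^ m * (s : ℂ) ^ (2 * m))
      = ((-1 : ℂ) ^ (m + 1) * (-1 : ℂ) ^ m) * (4 ^ m * (s : ℂ) ^ (2 * m)) := by ring
    _ = -(4 : ℂ) ^ m * (s : ℂ) ^ (2 * m) := by rw [h5]; ring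

lemma neg_val (n : ℕ) [NeZero n] (k : Fin n) (hk : k ≠ 0) :
    ((-k : Fin n) : ℕ) = n - (k : ℕ) := by
  have h0 : (k : ℕ) ≠ 0 := by
    intro h; exact hk (Fin.ext (by rw [h, Fin.val_zero]))
  have : ((-k : Fin n) : ℕ) = (n - (k : ℕ)) % n := rfl
  rw [this, Nat.mod_eq_of_lt (by omega)]

lemma lam_neg (n m : ℕ) [NeZero n] (k : Fin n) :
    lam n m ((-k : Fin n) : ℕ) = lam n m (k : ℕ) := by
  by_cases hk : k = 0
  · subst hk; simp
  · have hn0 : (0 : ℝ) < n := by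
      have := Nat.pos_of_ne_zero (NeZero.ne n); exact_mod_cast this
    rw [neg_val n k hk, lam, lam]
    congr 2
    have hkn : (k : ℕ) ≤ n := le_of_lt k.isLt
    have hcast : ((n - (k : ℕ) : ℕ) : ℝ) = (n : ℝ) - (k : ℕ) := by
      push_cast [Nat.cast_sub hkn]; ring
    rw [hcast, show Real.pi * ((n : ℝ) - (k : ℕ)) / n = Real.pi - Real.pi * (k : ℕ) / n by
      field_simp, Real.sin_pi_sub]

lemma sin_nonneg_aux (n : ℕ) [NeZero n] (j : Fin n) :
    0 ≤ Real.sin (Real.pi * (j : ℕ) / n) := by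
  have hn0 : (0 : ℝ) < n := by
    have := Nat.pos_of_ne_zero (NeZero.ne n); exact_mod_cast this
  apply Real.sin_nonneg_of_nonneg_of_le_pi
  · positivity
  · rw [div_le_iff₀ hn0]
    have hj : ((j : ℕ) : ℝ) ≤ n := by exact_mod_cast le_of_lt j.isLt
    nlinarith [Real.pi_pos]

lemma lam_inj (n m : ℕ) [NeZero n] (hm : 1 ≤ m) (j k : Fin n)
    (h : lam n m (j : ℕ) = lam n m (k : ℕ)) : j = k ∨ j = -k := by
  have hn0 : (0 : ℝ) < n := by
    have := Nat.pos_of_ne_zero (NeZero.ne n); exact_mod_cast this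
  have hπ : (0 : ℝ) < Real.pi := Real.pi_pos
  set a := Real.sin (Real.pi * (j : ℕ) / n) with ha_def
  set b := Real.sin (Real.pi * (k : ℕ) / n) with hb_def
  have hpow : a ^ (2 * m) = b ^ (2 * m) := by
    have h4 : (-(4 : ℝ) ^ m) ≠ 0 := neg_ne_zero.mpr (by positivity)
    rw [lam, lam] at h
    exact mul_left_cancel₀ h4 h
  have hsin : a = b :=
    (pow_left_strictMonoOn₀ (by omega : 2 * m ≠ 0)).injOn
      (sin_nonneg_aux n j) (sin_nonneg_aux n k) hpow
  have hcos2 : ∀ x : ℝ, Real.cos (2 * x) = 1 - 2 * Real.sin x ^ 2 := by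
    intro x
    have := Real.sin_sq_add_cos_sq x
    rw [Real.cos_two_mul]; nlinarith
  have hcos : Real.cos (2 * (Real.pi * (j : ℕ) / n)) = Real.cos (2 * (Real.pi * (k : ℕ) / n)) := by
    rw [hcos2, hcos2, ← ha_def, ← hb_def, hsin]
  rw [Real.cos_eq_cos_iff] at hcos
  obtain ⟨t, ht | ht⟩ := hcos
  · -- k-side = 2tπ + j-side  ⇒  k = t n + j
    left
    have h1 : ((k : ℕ) : ℝ) = t * n + (j : ℕ) := by
      have hne : (n : ℝ) ≠ 0 := ne_of_gt hn0
      have hπne : Real.pi ≠ 0 := ne_of_gt hπ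
      field_simp at ht
      nlinarith [ht]
    have h2 : ((k : ℕ) : ℤ) = t * n + (j : ℕ) := by exact_mod_cast h1
    have hkb : ((k : ℕ) : ℤ) < n := by exact_mod_cast k.isLt
    have hjb : ((j : ℕ) : ℤ) < n := by exact_mod_cast j.isLt
    have hj0 : (0 : ℤ) ≤ ((j : ℕ) : ℤ) := by positivity
    have hk0 : (0 : ℤ) ≤ ((k : ℕ) : ℤ) := by positivity
    have hnn : (0 : ℤ) < n := by exact_mod_cast Nat.pos_of_ne_zero (NeZero.ne n)
    have ht0 : t = 0 := by
      by_contra hτ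
      rcases lt_or_gt_of_ne hτ with hlt | hgt
      · have : t ≤ -1 := by omega
        nlinarith
      · have : 1 ≤ t := by omega
        nlinarith
    rw [ht0] at h2
    simp at h2
    exact Fin.ext (by exact_mod_cast h2.symm)
  · -- k-side = 2tπ - j-side  ⇒  k = t n - j
    have h1 : ((k : ℕ) : ℝ) = t * n - (j : ℕ) := by
      have hne : (n : ℝ) ≠ 0 := ne_of_gt hn0
      have hπne : Real.pi ≠ 0 := ne_of_gt hπ
      field_simp at ht
      nlinarith [ht]
    have h2 : ((k : ℕ) : ℤ) = t * n - (j : ℕ) := by exact_mod_cast h1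
    have hkb : ((k : ℕ) : ℤ) < n := by exact_mod_cast k.isLt
    have hjb : ((j : ℕ) : ℤ) < n := by exact_mod_cast j.isLt
    have hj0 : (0 : ℤ) ≤ ((j : ℕ) : ℤ) := by positivity
    have hk0 : (0 : ℤ) ≤ ((k : ℕ) : ℤ) := by positivity
    have hnn : (0 : ℤ) < n := by exact_mod_cast Nat.pos_of_ne_zero (NeZero.ne n)
    have ht01 : t = 0 ∨ t = 1 := by
      by_contra hτ
      push_neg at hτ
      obtain ⟨h0, h1'⟩ := hτ
      rcases lt_or_gt_of_ne h0 with hlt | hgt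
      · have : t ≤ -1 := by omega
        nlinarith
      · have : 2 ≤ t := by omega
        nlinarith
    rcases ht01 with rfl | rfl
    · left
      simp at h2
      have h4 : (k : ℕ) + (j : ℕ) = 0 := by
        have h3 : ((k : ℕ) : ℝ) + (j : ℕ) = 0 := by push_cast at h1; linarith
        exact_mod_cast h3
      have hk0' : (k : ℕ) = 0 := by omega
      have hj0' : (j : ℕ) = 0 := by omega
      exact Fin.ext (by omega)
    · right
      by_cases hk : k = 0
      · exfalso
        subst hk
        simp at h2
        omega
      · apply Fin.ext
        rw [neg_val n k hk]
        omega

lemma mulVec_sum_smul (n : ℕ) [NeZero n] (A : Matrix (Fin n) (Fin n) ℂ) (c : Fin n → ℂ)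
    (P : Fin n → Fin n → ℂ) :
    A.mulVec (∑ k : Fin n, c k • P k) = ∑ k : Fin n, c k • A.mulVec (P k) := by
  rw [← Matrix.mulVecLin_apply, map_sum]
  simp [Matrix.mulVecLin_apply]

lemma eigen_coef (n : ℕ) [NeZero n] (hn3 : 3 ≤ n) (m : ℕ) (v : Fin n → ℂ) (c : ℂ)
    (h : (((-1 : ℂ) ^ (m + 1)) • (cycMC n ^ m)).mulVec v = c • v) :
    ∀ k : Fin n, coef n v k * (((lam n m (k : ℕ) : ℝ) : ℂ) - c) = 0 := by
  set A := ((-1 : ℂ) ^ (m + 1)) • (cycMC n ^ m) with hA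
  have hexp := expand n v
  have hAv : A.mulVec v = ∑ k : Fin n, (coef n v k * ((lam n m (k : ℕ) : ℝ) : ℂ)) • fourierP n k := by
    conv_lhs => rw [hexp]
    rw [mulVec_sum_smul]
    apply Finset.sum_congr rfl
    intro k _
    rw [hA, lam_eigen n hn3 m k, smul_smul]
  have hcv : c • v = ∑ k : Fin n, (coef n v k * c) • fourierP n k := by
    conv_lhs => rw [hexp]
    rw [Finset.smul_sum]
    apply Finset.sum_congr rfl
    intro k _
    rw [smul_smul, mul_comm]
  have hzero : ∑ k : Fin n, (coef n v k * (((lam n m (k : ℕ) : ℝ) : ℂ) - c)) • fourierP n k = 0 := by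
    have : ∑ k : Fin n, (coef n v k * (((lam n m (k : ℕ) : ℝ) : ℂ) - c)) • fourierP n k
        = A.mulVec v - c • v := by
      rw [hAv, hcv, ← Finset.sum_sub_distrib]
      apply Finset.sum_congr rfl
      intro k _
      rw [← sub_smul]
      congr 1
      ring
    rw [this, h, sub_self]
  have := coef_unique n _ hzero
  intro k
  exact congrFun this k

lemma spec_exists (n : ℕ) [NeZero n] (hn3 : 3 ≤ n) (m : ℕ) (v : Fin n → ℂ) (hv : v ≠ 0) (c : ℂ)
    (h : (((-1 : ℂ) ^ (m + 1)) • (cycMC n ^ m)).mulVec v = c • v) :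
    ∃ k : Fin n, c = ((lam n m (k : ℕ) : ℝ) : ℂ) := by
  have hc := eigen_coef n hn3 m v c h
  by_contra hctr
  push_neg at hctr
  apply hv
  rw [expand n v]
  apply Finset.sum_eq_zero
  intro k _
  have : coef n v k = 0 := by
    rcases mul_eq_zero.mp (hc k) with h0 | h0
    · exact h0
    · exact absurd (by linear_combination -h0) (hctr k)
  rw [this, zero_smul]

lemma eigenspace_char (n : ℕ) [NeZero n] (hn3 : 3 ≤ n) (m : ℕ) (hm : 1 ≤ m) (k : Fin n)
    (hk0 : k ≠ 0) (hknk : k ≠ -k) (v : Fin n → ℂ) :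
    (((-1 : ℂ) ^ (m + 1)) • (cycMC n ^ m)).mulVec v = ((lam n m (k : ℕ) : ℝ) : ℂ) • v ↔
      v ∈ Submodule.span ℂ {fourierP n k, fourierP n (-k)} := by
  constructor
  · intro h
    have hc := eigen_coef n hn3 m v _ h
    rw [Submodule.mem_span_pair]
    refine ⟨coef n v k, coef n v (-k), ?_⟩
    have hsupp : ∀ j : Fin n, j ∉ ({k, -k} : Finset (Fin n)) → coef n v j • fourierP n j = 0 := by
      intro j hj
      simp only [Finset.mem_insert, Finset.mem_singleton] at hj
      push_neg at hj
      have hlam : lam n m (j : ℕ) ≠ lam n m (k : ℕ) := by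
        intro heq
        rcases lam_inj n m hm j k heq with h1 | h1
        · exact hj.1 h1
        · exact hj.2 h1
      have : coef n v j = 0 := by
        rcases mul_eq_zero.mp (hc j) with h0 | h0
        · exact h0
        · exact absurd (Complex.ofReal_inj.mp (by linear_combination h0)) hlam
      rw [this, zero_smul]
    have hvs : v = ∑ j ∈ ({k, -k} : Finset (Fin n)), coef n v j • fourierP n j :=
      (expand n v).trans
        (Finset.sum_subset (Finset.subset_univ ({k, -k} : Finset (Fin n)))
          (fun j _ hj => hsupp j hj)).symm
    rw [Finset.sum_pair hknk] at hvs
    exact hvs.symm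
  · intro h
    rw [Submodule.mem_span_pair] at h
    obtain ⟨a, b, rfl⟩ := h
    rw [Matrix.mulVec_add, Matrix.mulVec_smul, Matrix.mulVec_smul,
      lam_eigen n hn3 m k, lam_eigen n hn3 m (-k), lam_neg n m k, smul_add,
      smul_smul, smul_smul, smul_smul, smul_smul, mul_comm]
    congr 1
    rw [mul_comm]

theorem selfsimilar_scaling_solutions (n m : ℕ) [NeZero n] (hn : 3 ≤ n) (hm : 1 ≤ m)
    (X0 : Fin n → ℂ) (hX0 : X0 ≠ 0) (g : ℝ → ℝ) (hg : Differentiable ℝ g)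
    (hg0 : g 0 = 1) (hgne : ∀ t, g t ≠ 0)
    (hflow : ∀ (t : ℝ) (j : Fin n),
      HasDerivAt (fun s => g s • X0 j)
        ((((-1 : ℂ) ^ (m + 1)) • (cycMC n ^ m).mulVec (g t • X0)) j) t) :
    ∃ k : Fin n,
      (∀ t : ℝ, g t = Real.exp (lam n m k * t)) ∧
      (((-1 : ℂ) ^ (m + 1)) • (cycMC n ^ m)).mulVec X0 = ((lam n m k : ℝ) : ℂ) • X0 ∧
      (k ≠ 0 → k ≠ -k →
        ∀ v : Fin n → ℂ,
          (((-1 : ℂ) ^ (m + 1)) • (cycMC n ^ m)).mulVec v = ((lam n m k : ℝ) : ℂ) • v ↔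
            v ∈ Submodule.span ℂ {fourierP n k, fourierP n (-k)}) := by
  obtain ⟨j0, hj0⟩ : ∃ j, X0 j ≠ 0 := by
    by_contra h
    push_neg at h
    exact hX0 (funext h)
  set W : Fin n → ℂ := (cycMC n ^ m).mulVec X0 with hW
  have hsm : ∀ t : ℝ, (cycMC n ^ m).mulVec (g t • X0) = ((g t : ℝ) : ℂ) • W := by
    intro t
    have h1 : (g t • X0) = ((g t : ℝ) : ℂ) • X0 := by
      funext j
      simp [Complex.real_smul]
    rw [h1, Matrix.mulVec_smul, hW]
  have heq : ∀ (t : ℝ) (j : Fin n),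
      ((deriv g t : ℝ) : ℂ) * X0 j = ((g t : ℝ) : ℂ) * ((-1 : ℂ) ^ (m + 1) * W j) := by
    intro t j
    have hd : HasDerivAt (fun s => g s • X0 j) ((deriv g t) • X0 j) t :=
      ((hg t).hasDerivAt).smul_const (X0 j)
    have := hd.unique (hflow t j)
    rw [hsm t] at this
    simpa [Complex.real_smul, mul_comm, mul_assoc, mul_left_comm] using this
  set r : ℝ := deriv g 0 with hr0
  have hW0 : ∀ j : Fin n, (-1 : ℂ) ^ (m + 1) * W j = ((r : ℝ) : ℂ) * X0 j := by
    intro j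
    have := heq 0 j
    rw [hg0] at this
    push_cast at this
    rw [one_mul] at this
    exact this.symm
  have hEig : (((-1 : ℂ) ^ (m + 1)) • (cycMC n ^ m)).mulVec X0 = ((r : ℝ) : ℂ) • X0 := by
    funext j
    rw [Matrix.smul_mulVec]
    simp only [Pi.smul_apply, smul_eq_mul]
    exact hW0 j
  obtain ⟨k, hk⟩ := spec_exists n hn m X0 hX0 (((r : ℝ) : ℂ)) hEig
  have hr : r = lam n m (k : ℕ) := Complex.ofReal_inj.mp hk
  have hgd : ∀ t, deriv g t = g t * r := by
    intro t
    have h1 := heq t j0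
    rw [hW0 j0] at h1
    have h2 : ((deriv g t : ℝ) : ℂ) * X0 j0 = ((g t * r : ℝ) : ℂ) * X0 j0 := by
      push_cast
      linear_combination h1
    have := mul_right_cancel₀ hj0 h2
    exact_mod_cast this
  have hder : ∀ t, HasDerivAt (fun s => g s * Real.exp (-(r * s))) 0 t := by
    intro t
    have hin : HasDerivAt (fun s : ℝ => -(r * s)) (-r) t := by
      simpa using ((hasDerivAt_id t).const_mul (-r))
    have hexp : HasDerivAt (fun s => Real.exp (-(r * s))) (Real.exp (-(r * t)) * (-r)) t :=
      hin.exp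
    have hmul := ((hg t).hasDerivAt).mul hexp
    refine hmul.congr_deriv ?_
    rw [hgd t]
    ring
  have hconst : ∀ t, g t * Real.exp (-(r * t)) = 1 := by
    intro t
    have := is_const_of_deriv_eq_zero (f := fun s => g s * Real.exp (-(r * s)))
      (fun s => (hder s).differentiableAt) (fun s => (hder s).deriv) t 0
    simpa [hg0] using this
  have hgt : ∀ t, g t = Real.exp (r * t) := by
    intro t
    have hx : Real.exp (-(r * t)) * Real.exp (r * t) = 1 := by
      rw [← Real.exp_add]
      simp
    calc g t = g t * (Real.exp (-(r * t)) * Real.exp (r * t)) := by rw [hx, mul_one]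
      _ = (g t * Real.exp (-(r * t))) * Real.exp (r * t) := by ring
      _ = Real.exp (r * t) := by rw [hconst t, one_mul]
  refine ⟨k, ?_, ?_, ?_⟩
  · intro t
    rw [← hr]
    exact hgt t
  · rw [← hr]
    exact hEig
  · intro hk0 hknk v
    exact eigenspace_char n hn m hm k hk0 hknk v
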